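/- For s₀ ≥ 0 satisfying H̃_{1+s₀} − s₀R' = R' − R and (d/ds)H̃_{1+s}|_{s=s₀} = R' (where H̃_{1+s} := H̃_{1+s}(A|E|P^{A,E}) and R' is determined by s₀), one has max_{R' ≥ R} min{max_{s≥0}(H̃_{1+s} − sR'), R' − R} = max_{s≥0} [H̃_{1+s} − sR]/(1+s). -/

import Mathlib

open Real Finset

lemma convexOn_log_sum_exp' {ι : Type*} (T : Finset ι) (hT : T.Nonempty) (a b : ι → ℝ) :
    ConvexOn ℝ Set.univ (fun s : ℝ => Real.log (∑ p ∈ T, Real.exp (a p + b p * s))) := by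
  have hpos : ∀ s : ℝ, 0 < ∑ p ∈ T, Real.exp (a p + b p * s) := fun s =>
    Finset.sum_pos (fun p _ => Real.exp_pos _) hT
  refine ⟨convex_univ, ?_⟩
  intro x _ y _ u v hu hv huv
  simp only [smul_eq_mul]
  rcases eq_or_lt_of_le hu with hu0 | hu0
  · have hv1 : v = 1 := by linarith
    simp [← hu0, hv1]
  rcases eq_or_lt_of_le hv with hv0 | hv0
  · have hu1 : u = 1 := by linarith
    simp [← hv0, hu1]
  have hconj : Real.HolderConjugate (1/u) (1/v) := by
    rw [Real.holderConjugate_iff]; constructor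
    · rw [lt_div_iff₀ hu0]; linarith
    · simp only [one_div, inv_inv]; exact huv
  have hsplit : ∀ p, Real.exp (a p + b p * (u * x + v * y))
      = Real.exp (a p + b p * x) ^ u * Real.exp (a p + b p * y) ^ v := by
    intro p
    rw [← Real.exp_mul, ← Real.exp_mul, ← Real.exp_add]
    congr 1
    linear_combination (-(a p)) * huv
  have hsum : (∑ p ∈ T, Real.exp (a p + b p * (u * x + v * y)))
      ≤ (∑ p ∈ T, Real.exp (a p + b p * x)) ^ u * (∑ p ∈ T, Real.exp (a p + b p * y)) ^ v := by
    have h := Real.inner_le_Lp_mul_Lq_of_nonneg (s := T)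
      (f := fun p => Real.exp (a p + b p * x) ^ u)
      (g := fun p => Real.exp (a p + b p * y) ^ v) hconj
      (fun p _ => Real.rpow_nonneg (Real.exp_pos _).le _)
      (fun p _ => Real.rpow_nonneg (Real.exp_pos _).le _)
    simp only [← Real.rpow_mul (Real.exp_pos _).le] at h
    rw [mul_one_div_cancel hu0.ne', mul_one_div_cancel hv0.ne'] at h
    simp only [Real.rpow_one, one_div_one_div] at h
    calc (∑ p ∈ T, Real.exp (a p + b p * (u * x + v * y)))
        = ∑ p ∈ T, Real.exp (a p + b p * x) ^ u * Real.exp (a p + b p * y) ^ v :=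
          Finset.sum_congr rfl (fun p _ => hsplit p)
      _ ≤ _ := h
  calc Real.log (∑ p ∈ T, Real.exp (a p + b p * (u * x + v * y)))
      ≤ Real.log ((∑ p ∈ T, Real.exp (a p + b p * x)) ^ u
          * (∑ p ∈ T, Real.exp (a p + b p * y)) ^ v) :=
        Real.log_le_log (hpos _) hsum
    _ = u * Real.log (∑ p ∈ T, Real.exp (a p + b p * x))
          + v * Real.log (∑ p ∈ T, Real.exp (a p + b p * y)) := by
        rw [Real.log_mul (Real.rpow_pos_of_pos (hpos x) u).ne'
            (Real.rpow_pos_of_pos (hpos y) v).ne',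
          Real.log_rpow (hpos x), Real.log_rpow (hpos y)]

lemma tangent_le_of_convex {F : ℝ → ℝ} (hF : ConvexOn ℝ Set.univ F) {d x : ℝ}
    (hd : HasDerivAt F d x) (y : ℝ) : F x + d * (y - x) ≤ F y := by
  rcases lt_trichotomy x y with h | h | h
  · have hs := hF.le_slope_of_hasDerivAt (Set.mem_univ x) (Set.mem_univ y) h hd
    rw [slope_def_field, le_div_iff₀ (by linarith : (0:ℝ) < y - x)] at hs
    linarith
  · subst h; simp
  · have hs := hF.slope_le_of_hasDerivAt (Set.mem_univ y) (Set.mem_univ x) h hd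
    rw [slope_def_field, div_le_iff₀ (by linarith : (0:ℝ) < x - y)] at hs
    linarith

/-- Equation (n4-16-6)/(4-16-6): if `s₀ ≥ 0` and `R'₀` satisfy
`H̃_{1+s₀} − s₀·R'₀ = R'₀ − R` and `(d/ds) H̃_{1+s}|_{s=s₀} = R'₀`, then
`max_{R'≥R} min{ max_{s≥0} (H̃_{1+s} − s·R'), R' − R }
  = max_{s≥0} (H̃_{1+s} − s·R)/(1+s)`,
where `H̃_{1+s} = −log ∑_{a,e} P(a,e)^{1+s} P^E(e)^{−s}`. -/
theorem maxmin_exponent_formula {A E : Type*} [Fintype A] [Fintype E]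
    (P : A × E → ℝ) (hP : ∀ p, 0 ≤ P p) (hP1 : ∑ p, P p = 1)
    (R s₀ R'₀ : ℝ) (hs₀ : 0 ≤ s₀)
    (hbal : (-Real.log (∑ p : A × E, P p ^ (1 + s₀) * (∑ a, P (a, p.2)) ^ (-s₀)))
        - s₀ * R'₀ = R'₀ - R)
    (hderiv : HasDerivAt
        (fun s : ℝ => -Real.log (∑ p : A × E, P p ^ (1 + s) * (∑ a, P (a, p.2)) ^ (-s)))
        R'₀ s₀) :
    sSup {v : ℝ | ∃ R' : ℝ, R ≤ R' ∧
        v = min (sSup ((fun s : ℝ =>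
            (-Real.log (∑ p : A × E, P p ^ (1 + s) * (∑ a, P (a, p.2)) ^ (-s))) - s * R')
          '' Set.Ici 0)) (R' - R)}
      = sSup ((fun s : ℝ =>
          ((-Real.log (∑ p : A × E, P p ^ (1 + s) * (∑ a, P (a, p.2)) ^ (-s))) - s * R)
            / (1 + s)) '' Set.Ici 0) := by
  classical
  set T : Finset (A × E) := Finset.univ.filter (fun p => P p ≠ 0) with hT
  have hTne : T.Nonempty := by
    obtain ⟨p, _, hp⟩ := Finset.exists_ne_zero_of_sum_ne_zero (by rw [hP1]; norm_num :
      ∑ p : A × E, P p ≠ 0)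
    exact ⟨p, by simp [hT, hp]⟩
  have hQ : ∀ p : A × E, P p ≤ ∑ a, P (a, p.2) := by
    intro p
    have := Finset.single_le_sum (f := fun a => P (a, p.2)) (fun a _ => hP _)
      (Finset.mem_univ p.1)
    simpa using this
  -- the exponential representation
  have hEq : ∀ s : ℝ, -1 < s →
      (∑ p : A × E, P p ^ (1 + s) * (∑ a, P (a, p.2)) ^ (-s))
        = ∑ p ∈ T, Real.exp (Real.log (P p)
            + (Real.log (P p) - Real.log (∑ a, P (a, p.2))) * s) := by
    intro s hs
    rw [← Finset.sum_subset (Finset.subset_univ T) ?h0]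
    · refine Finset.sum_congr rfl (fun p hp => ?_)
      have hPp : 0 < P p := lt_of_le_of_ne (hP p) (Ne.symm (by simpa [hT] using hp))
      have hQp : 0 < ∑ a, P (a, p.2) := lt_of_lt_of_le hPp (hQ p)
      rw [Real.rpow_def_of_pos hPp, Real.rpow_def_of_pos hQp, ← Real.exp_add]
      congr 1
      ring
    · intro p _ hp
      have hPp : P p = 0 := by simpa [hT] using hp
      rw [hPp, Real.zero_rpow (by linarith : (1:ℝ) + s ≠ 0), zero_mul]
  -- convexity and derivative of F = log of the exp-sum
  set F : ℝ → ℝ := fun s => Real.log (∑ p ∈ T, Real.exp (Real.log (P p)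
      + (Real.log (P p) - Real.log (∑ a, P (a, p.2))) * s)) with hF
  have hFconv : ConvexOn ℝ Set.univ F :=
    convexOn_log_sum_exp' T hTne _ _
  have hev : (fun s : ℝ => -Real.log (∑ p : A × E, P p ^ (1 + s) * (∑ a, P (a, p.2)) ^ (-s)))
      =ᶠ[nhds s₀] fun s => -F s := by
    filter_upwards [Ioi_mem_nhds (show (-1:ℝ) < s₀ by linarith)] with s hs
    rw [hEq s hs]
  have hFd : HasDerivAt F (-R'₀) s₀ := by
    have h1 : HasDerivAt (fun s => -F s) R'₀ s₀ := hderiv.congr_of_eventuallyEq hev.symm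
    have h2 : HasDerivAt (fun s => -(-F s)) (-R'₀) s₀ := h1.neg
    simpa using h2
  -- the key tangent-line inequality
  have hbalF : -F s₀ - s₀ * R'₀ = R'₀ - R := by
    rw [hF]
    simp only
    rw [← hEq s₀ (by linarith)]
    exact hbal
  have key : ∀ s : ℝ, 0 ≤ s →
      (-Real.log (∑ p : A × E, P p ^ (1 + s) * (∑ a, P (a, p.2)) ^ (-s)))
        ≤ (R'₀ - R) + R'₀ * s := by
    intro s hs
    have htan := tangent_le_of_convex hFconv hFd s
    have : -F s ≤ -F s₀ + R'₀ * (s - s₀) := by linarith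
    rw [show (-Real.log (∑ p : A × E, P p ^ (1 + s) * (∑ a, P (a, p.2)) ^ (-s))) = -F s by
      rw [hEq s (by linarith)]]
    nlinarith [hbalF]
  -- H 0 = 0, hence 0 ≤ R'₀ - R
  have H0 : (-Real.log (∑ p : A × E, P p ^ (1 + (0:ℝ)) * (∑ a, P (a, p.2)) ^ (-(0:ℝ)))) = 0 := by
    simp [hP1]
  have hc0 : 0 ≤ R'₀ - R := by
    have := key 0 le_rfl
    rw [H0] at this
    linarith
  -- RHS sSup
  have hRgreat : IsGreatest ((fun s : ℝ =>
      ((-Real.log (∑ p : A × E, P p ^ (1 + s) * (∑ a, P (a, p.2)) ^ (-s))) - s * R)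
        / (1 + s)) '' Set.Ici 0) (R'₀ - R) := by
    constructor
    · refine ⟨s₀, Set.mem_Ici.mpr hs₀, ?_⟩
      rw [div_eq_iff (by linarith : (1:ℝ) + s₀ ≠ 0)]
      linear_combination hbal
    · rintro v ⟨s, hs, rfl⟩
      have hs' : (0:ℝ) ≤ s := hs
      dsimp only
      rw [div_le_iff₀ (by linarith : (0:ℝ) < 1 + s)]
      nlinarith [key s hs']
  -- inner sSup at R'₀
  have hInner : IsGreatest ((fun s : ℝ =>
      (-Real.log (∑ p : A × E, P p ^ (1 + s) * (∑ a, P (a, p.2)) ^ (-s))) - s * R'₀)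
        '' Set.Ici 0) (R'₀ - R) := by
    constructor
    · exact ⟨s₀, Set.mem_Ici.mpr hs₀, hbal⟩
    · rintro v ⟨s, hs, rfl⟩
      have hs' : (0:ℝ) ≤ s := hs
      have := key s hs'
      dsimp only
      linarith
  -- LHS sSup
  have hLgreat : IsGreatest {v : ℝ | ∃ R' : ℝ, R ≤ R' ∧
      v = min (sSup ((fun s : ℝ =>
          (-Real.log (∑ p : A × E, P p ^ (1 + s) * (∑ a, P (a, p.2)) ^ (-s))) - s * R')
        '' Set.Ici 0)) (R' - R)} (R'₀ - R) := by
    constructor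
    · exact ⟨R'₀, by linarith, by rw [hInner.csSup_eq, min_self]⟩
    · rintro v ⟨R', hRR', rfl⟩
      rcases le_or_gt (R' - R) (R'₀ - R) with h | h
      · exact le_trans (min_le_right _ _) h
      · refine le_trans (min_le_left _ _) (csSup_le ?_ ?_)
        · exact ⟨_, ⟨0, Set.self_mem_Ici, rfl⟩⟩
        · rintro b ⟨s, hs, rfl⟩
          have hs' : (0:ℝ) ≤ s := hs
          dsimp only
          nlinarith [key s hs', mul_nonneg hs' (show (0:ℝ) ≤ R' - R'₀ by linarith)]
  rw [hLgreat.csSup_eq, hRgreat.csSup_eq]
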